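/- Let G be obtained from snarks G_0, G_1, G_2 by the windmill construction. Then every perfect matching M of G satisfies |M ∩ ∂H_i| ∈ {0,2} for each i, and M is of type 2 on at most one H_i, of type 0 on exactly one H_i, and of type 1 on at least one H_i. -/

import Mathlib

open SimpleGraph

/-- A graph is cubic (3-regular) if every vertex has exactly 3 neighbours. -/
def IsCubic {V : Type*} (G : SimpleGraph V) : Prop :=
  ∀ v : V, (G.neighborSet v).ncard = 3

/-- A graph is bridgeless if it has no cut-edge. -/
def IsBridgeless {V : Type*} (G : SimpleGraph V) : Prop :=
  ∀ e : Sym2 V, ¬ G.IsBridge e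

/-- The edge set of `G` can be covered by `k` perfect matchings. -/
def CoverByPM {V : Type*} (G : SimpleGraph V) (k : ℕ) : Prop :=
  ∃ M : Fin k → G.Subgraph,
    (∀ i, (M i).IsPerfectMatching) ∧ (⋃ i, (M i).edgeSet) = G.edgeSet

/-- The excessive index of `G`: the least number of perfect matchings needed to
cover the edge set of `G` (`⊤` if there is no such cover). -/
noncomputable def excessiveIndex {V : Type*} (G : SimpleGraph V) : ℕ∞ :=
  sInf {k : ℕ∞ | ∃ n : ℕ, k = n ∧ CoverByPM G n}

/-- `G` has a proper edge colouring with `n` colours. -/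
def ProperEdgeColorable {V : Type*} (G : SimpleGraph V) (n : ℕ) : Prop :=
  ∃ c : Sym2 V → Fin n, ∀ e ∈ G.edgeSet, ∀ f ∈ G.edgeSet,
    e ≠ f → (∃ v : V, v ∈ e ∧ v ∈ f) → c e ≠ c f

/-- The set of edges of `G` with one end-vertex in `A` and the other in `B`. -/
def edgesBetween {V : Type*} (G : SimpleGraph V) (A B : Set V) : Set (Sym2 V) :=
  {e | ∃ a b, G.Adj a b ∧ a ∈ A ∧ b ∈ B ∧ e = s(a, b)}

/-- The set of edges of `G` with exactly one end-vertex in `A`. -/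
def edgeBoundary {V : Type*} (G : SimpleGraph V) (A : Set V) : Set (Sym2 V) :=
  edgesBetween G A Aᶜ

/-- The subgraph induced on `A` contains a cycle. -/
def HasCycleOn {V : Type*} (G : SimpleGraph V) (A : Set V) : Prop :=
  ¬ (G.induce A).IsAcyclic

/-- `G` is cyclically `k`-edge-connected: there is no edge-cut with fewer than `k`
edges separating two parts each containing a cycle. -/
def CyclicallyEdgeConnected {V : Type*} (G : SimpleGraph V) (k : ℕ) : Prop :=
  ∀ A : Set V, HasCycleOn G A → HasCycleOn G Aᶜ → k ≤ (edgeBoundary G A).ncard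

/-- A snark: a cubic, cyclically 4-edge-connected graph of girth at least five
that is not 3-edge-colourable. -/
def IsSnark {V : Type*} (G : SimpleGraph V) : Prop :=
  IsCubic G ∧ CyclicallyEdgeConnected G 4 ∧ 5 ≤ G.girth ∧ ¬ ProperEdgeColorable G 3

/-- The data for the windmill construction: three graphs `G i`, each with a
distinguished edge `x i — y i`, where `x0 i, x1 i` are the two neighbours of
`x i` other than `y i`, and `y0 i, y1 i` the two neighbours of `y i` other
than `x i`. -/
structure WindmillData where
  V : Fin 3 → Type
  G : ∀ i, SimpleGraph (V i)
  x : ∀ i, V i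
  y : ∀ i, V i
  x0 : ∀ i, V i
  x1 : ∀ i, V i
  y0 : ∀ i, V i
  y1 : ∀ i, V i
  adj_xy : ∀ i, (G i).Adj (x i) (y i)
  adj_xx0 : ∀ i, (G i).Adj (x i) (x0 i)
  adj_xx1 : ∀ i, (G i).Adj (x i) (x1 i)
  adj_yy0 : ∀ i, (G i).Adj (y i) (y0 i)
  adj_yy1 : ∀ i, (G i).Adj (y i) (y1 i)
  x0_ne_x1 : ∀ i, x0 i ≠ x1 i
  y0_ne_y1 : ∀ i, y0 i ≠ y1 i
  x0_ne_y : ∀ i, x0 i ≠ y i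
  x1_ne_y : ∀ i, x1 i ≠ y i
  y0_ne_x : ∀ i, y0 i ≠ x i
  y1_ne_x : ∀ i, y1 i ≠ x i

namespace WindmillData

variable (D : WindmillData)

/-- The vertices of `H i = G i − {x i, y i}`. -/
def HVert (i : Fin 3) : Type := {v : D.V i // v ≠ D.x i ∧ v ≠ D.y i}

/-- The vertices of the windmill graph: the vertices of `H 0, H 1, H 2`,
the nine new vertices `a i, b i, c i` and the new vertex `u`. -/
def Vert : Type := (Σ i : Fin 3, D.HVert i) ⊕ ((Fin 3 × Fin 3) ⊕ Unit)

/-- A vertex of `H i`, as a vertex of the windmill graph. -/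
def hv {i : Fin 3} (v : D.HVert i) : D.Vert := Sum.inl ⟨i, v⟩
/-- The new vertex `a i`. -/
def av (i : Fin 3) : D.Vert := Sum.inr (Sum.inl (i, 0))
/-- The new vertex `b i`. -/
def bv (i : Fin 3) : D.Vert := Sum.inr (Sum.inl (i, 1))
/-- The new vertex `c i`. -/
def cv (i : Fin 3) : D.Vert := Sum.inr (Sum.inl (i, 2))
/-- The new vertex `u`. -/
def uv : D.Vert := Sum.inr (Sum.inr ())

/-- The vertex `x i ^ 0` of `H i`. -/
def x0v (i : Fin 3) : D.Vert := D.hv ⟨D.x0 i, (D.adj_xx0 i).ne', D.x0_ne_y i⟩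
/-- The vertex `x i ^ 1` of `H i`. -/
def x1v (i : Fin 3) : D.Vert := D.hv ⟨D.x1 i, (D.adj_xx1 i).ne', D.x1_ne_y i⟩
/-- The vertex `y i ^ 0` of `H i`. -/
def y0v (i : Fin 3) : D.Vert := D.hv ⟨D.y0 i, D.y0_ne_x i, (D.adj_yy0 i).ne'⟩
/-- The vertex `y i ^ 1` of `H i`. -/
def y1v (i : Fin 3) : D.Vert := D.hv ⟨D.y1 i, D.y1_ne_x i, (D.adj_yy1 i).ne'⟩

/-- The adjacency relation of the windmill construction: edges inside each `H i`;
`a i` joined to `x (i+1) ^ 0` and `y (i-1) ^ 0`; `b i` joined to `x (i+1) ^ 1`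
and `y (i-1) ^ 1`; and `c i` joined to `a i`, `b i` and `u`. -/
def rel : D.Vert → D.Vert → Prop := fun p q =>
  (∃ (i : Fin 3) (v w : D.HVert i), (D.G i).Adj v.1 w.1 ∧ p = D.hv v ∧ q = D.hv w) ∨
  (∃ i : Fin 3, p = D.av i ∧ q = D.x0v (i + 1)) ∨
  (∃ i : Fin 3, p = D.av i ∧ q = D.y0v (i - 1)) ∨
  (∃ i : Fin 3, p = D.bv i ∧ q = D.x1v (i + 1)) ∨
  (∃ i : Fin 3, p = D.bv i ∧ q = D.y1v (i - 1)) ∨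
  (∃ i : Fin 3, p = D.cv i ∧ (q = D.av i ∨ q = D.bv i ∨ q = D.uv))

/-- The graph obtained from `G 0, G 1, G 2` by the windmill construction. -/
def graph : SimpleGraph D.Vert := SimpleGraph.fromRel D.rel

/-- The set of vertices of `H i` inside the windmill graph. -/
def Hset (i : Fin 3) : Set D.Vert := {p | ∃ v : D.HVert i, p = D.hv v}

/-- The set `A i = {a i, b i, c i}`. -/
def Aset (i : Fin 3) : Set D.Vert := {D.av i, D.bv i, D.cv i}

/-- A set of edges is of type 0 on `H i` if it misses `∂ H i`. -/
def Type0On (M : Set (Sym2 D.Vert)) (i : Fin 3) : Prop :=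
  (M ∩ edgeBoundary D.graph (D.Hset i)).ncard = 0

/-- A set of edges is of type 1 on `H i` if it has exactly one edge to
`A (i-1)` and exactly one edge to `A (i+1)`. -/
def Type1On (M : Set (Sym2 D.Vert)) (i : Fin 3) : Prop :=
  (M ∩ edgesBetween D.graph (D.Hset i) (D.Aset (i - 1))).ncard = 1 ∧
  (M ∩ edgesBetween D.graph (D.Hset i) (D.Aset (i + 1))).ncard = 1

/-- A set of edges is of type 2 on `H i` if it has exactly two edges in
`∂ H i` but is not of type 1. -/
def Type2On (M : Set (Sym2 D.Vert)) (i : Fin 3) : Prop :=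
  (M ∩ edgeBoundary D.graph (D.Hset i)).ncard = 2 ∧ ¬ D.Type1On M i

/-- For `i ≠ j`, the edge connecting `H i` to `a j`. -/
def eEdge (i j : Fin 3) : Sym2 D.Vert :=
  if i = j + 1 then s(D.av j, D.x0v i) else s(D.av j, D.y0v i)

/-- For `i ≠ j`, the edge connecting `H i` to `b j`. -/
def fEdge (i j : Fin 3) : Sym2 D.Vert :=
  if i = j + 1 then s(D.bv j, D.x1v i) else s(D.bv j, D.y1v i)

end WindmillData

/-! ### Auxiliary lemmas -/

theorem even_card_of_involution' {α : Type*} [DecidableEq α] (s : Finset α) (g : α → α)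
    (hmem : ∀ x ∈ s, g x ∈ s) (hinv : ∀ x ∈ s, g (g x) = x) (hne : ∀ x ∈ s, g x ≠ x) :
    Even s.card := by
  induction s using Finset.strongInduction with
  | _ s ih =>
    rcases s.eq_empty_or_nonempty with rfl | ⟨x, hx⟩
    · simp
    · have hgx := hmem x hx
      have hxne : x ≠ g x := (hne x hx).symm
      have hsub : ({x, g x} : Finset α) ⊆ s := by
        intro y hy; simp at hy; rcases hy with rfl | rfl <;> assumption
      have hss : s \ {x, g x} ⊂ s := Finset.sdiff_ssubset hsub ⟨x, by simp⟩
      have h2 : Even (s \ {x, g x}).card := by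
        refine ih _ hss ?_ ?_ ?_
        · intro y hy
          simp only [Finset.mem_sdiff, Finset.mem_insert, Finset.mem_singleton] at hy ⊢
          obtain ⟨hys, hyn⟩ := hy
          push_neg at hyn ⊢
          refine ⟨hmem y hys, ?_, ?_⟩
          · rintro h
            exact hyn.2 (by rw [← hinv y hys, h])
          · rintro h
            have : y = x := by
              have := congrArg g h; rwa [hinv y hys, hinv x hx] at this
            exact hyn.1 this
        · intro y hy; exact hinv y (Finset.mem_sdiff.1 hy).1
        · intro y hy; exact hne y (Finset.mem_sdiff.1 hy).1
      have hc2 : ({x, g x} : Finset α).card = 2 := by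
        rw [Finset.card_insert_of_notMem (by simpa using hxne), Finset.card_singleton]
      have hle : 2 ≤ s.card := hc2 ▸ Finset.card_le_card hsub
      have hcard : s.card = (s \ {x, g x}).card + 2 := by
        rw [Finset.card_sdiff_of_subset hsub, hc2]; omega
      rw [hcard]; exact h2.add even_two

/-- Abstract edge counts for the windmill matching analysis. -/
def mcount (A B : Fin 3 → Fin 3) (i : Fin 3) : ℕ × ℕ :=
  ((if A (i-1) = 1 then 1 else 0) + (if B (i-1) = 1 then 1 else 0),
   (if A (i+1) = 2 then 1 else 0) + (if B (i+1) = 2 then 1 else 0))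

set_option synthInstance.maxSize 2000 in
set_option synthInstance.maxHeartbeats 1000000 in
set_option maxHeartbeats 4000000 in
theorem key_lemma : ∀ (A B : Fin 3 → Fin 3) (i0 : Fin 3),
    (∀ j, j ≠ i0 → (A j = 0 ↔ ¬ B j = 0)) → A i0 ≠ 0 → B i0 ≠ 0 →
    (∀ i, ((mcount A B i).1 + (mcount A B i).2) % 2 = 0) →
    (∀ i, (mcount A B i).1 + (mcount A B i).2 = 0 ∨ (mcount A B i).1 + (mcount A B i).2 = 2) ∧
    (Finset.univ.filter fun i => (mcount A B i).1 + (mcount A B i).2 = 2 ∧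
        ¬((mcount A B i).1 = 1 ∧ (mcount A B i).2 = 1)).card ≤ 1 ∧
    (Finset.univ.filter fun i => (mcount A B i).1 + (mcount A B i).2 = 0).card = 1 ∧
    1 ≤ (Finset.univ.filter fun i => (mcount A B i).1 = 1 ∧ (mcount A B i).2 = 1).card := by
  decide

theorem pm_edges_between {V : Type*} {G : SimpleGraph V} {M : G.Subgraph} {f : V → V}
    (hf : ∀ v, M.Adj v (f v)) (hfu : ∀ v w, M.Adj v w → w = f v)
    (A B : Set V) :
    M.edgeSet ∩ edgesBetween G A B = (fun w => s(w, f w)) '' {w | w ∈ B ∧ f w ∈ A} := by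
  ext e; constructor
  · rintro ⟨hm, a, b, hadj, ha, hb, rfl⟩
    have hab : M.Adj a b := SimpleGraph.Subgraph.mem_edgeSet.mp hm
    have h2 : a = f b := hfu b a hab.symm
    exact ⟨b, ⟨hb, h2 ▸ ha⟩, by simp only [← h2]; exact Sym2.eq_swap⟩
  · rintro ⟨w, ⟨hw, hfw⟩, rfl⟩
    exact ⟨SimpleGraph.Subgraph.mem_edgeSet.mpr (hf w), f w, w, ((hf w).adj_sub).symm,
      hfw, hw, Sym2.eq_swap⟩

theorem pm_ncard_between {V : Type*} {G : SimpleGraph V} {M : G.Subgraph} {f : V → V}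
    (hf : ∀ v, M.Adj v (f v)) (hfu : ∀ v w, M.Adj v w → w = f v)
    (A B : Set V) (hdisj : ∀ x, x ∈ A → x ∉ B) :
    (M.edgeSet ∩ edgesBetween G A B).ncard = {w | w ∈ B ∧ f w ∈ A}.ncard := by
  rw [pm_edges_between hf hfu A B]
  apply Set.ncard_image_of_injOn
  intro w hw w' hw' he
  rcases Sym2.eq_iff.mp he with ⟨h1, -⟩ | ⟨h1, h2⟩
  · exact h1
  · exact absurd (h1 ▸ hw.1) (hdisj _ hw'.2)

namespace WindmillData

variable {D : WindmillData}

/-- A decoder distinguishing the different kinds of vertices. -/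
def vcode (p : D.Vert) : ℕ :=
  Sum.elim (fun _ => 0) (Sum.elim (fun pr => 1 + pr.2.val) (fun _ => 10)) p

/-- The index of a vertex. -/
def vidx (p : D.Vert) : ℕ :=
  Sum.elim (fun s => s.1.val) (Sum.elim (fun pr => pr.1.val) (fun _ => 0)) p

lemma hv_ne_av {i j : Fin 3} (v : D.HVert i) : D.hv v ≠ D.av j := fun h => by
  have h1 : (0 : ℕ) = 1 := congrArg vcode h; omega
lemma hv_ne_bv {i j : Fin 3} (v : D.HVert i) : D.hv v ≠ D.bv j := fun h => by
  have h1 : (0 : ℕ) = 2 := congrArg vcode h; omega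
lemma hv_ne_cv {i j : Fin 3} (v : D.HVert i) : D.hv v ≠ D.cv j := fun h => by
  have h1 : (0 : ℕ) = 3 := congrArg vcode h; omega
lemma hv_ne_uv {i : Fin 3} (v : D.HVert i) : D.hv v ≠ D.uv := fun h => by
  have h1 : (0 : ℕ) = 10 := congrArg vcode h; omega
lemma av_ne_bv {i j : Fin 3} : D.av i ≠ D.bv j := fun h => by
  have h1 : (1 : ℕ) = 2 := congrArg vcode h; omega
lemma av_ne_cv {i j : Fin 3} : D.av i ≠ D.cv j := fun h => by
  have h1 : (1 : ℕ) = 3 := congrArg vcode h; omega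
lemma bv_ne_cv {i j : Fin 3} : D.bv i ≠ D.cv j := fun h => by
  have h1 : (2 : ℕ) = 3 := congrArg vcode h; omega
lemma av_ne_uv {i : Fin 3} : D.av i ≠ D.uv := fun h => by
  have h1 : (1 : ℕ) = 10 := congrArg vcode h; omega
lemma bv_ne_uv {i : Fin 3} : D.bv i ≠ D.uv := fun h => by
  have h1 : (2 : ℕ) = 10 := congrArg vcode h; omega
lemma cv_ne_uv {i : Fin 3} : D.cv i ≠ D.uv := fun h => by
  have h1 : (3 : ℕ) = 10 := congrArg vcode h; omega

lemma av_inj {i j : Fin 3} (h : D.av i = D.av j) : i = j := by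
  have h1 : i.val = j.val := congrArg vidx h; exact Fin.val_injective h1
lemma bv_inj {i j : Fin 3} (h : D.bv i = D.bv j) : i = j := by
  have h1 : i.val = j.val := congrArg vidx h; exact Fin.val_injective h1
lemma cv_inj {i j : Fin 3} (h : D.cv i = D.cv j) : i = j := by
  have h1 : i.val = j.val := congrArg vidx h; exact Fin.val_injective h1

lemma hv_eq_index {i i' : Fin 3} {v : D.HVert i} {v' : D.HVert i'}
    (h : D.hv v = D.hv v') : i = i' := by
  have h1 : i.val = i'.val := congrArg vidx h
  exact Fin.val_injective h1


lemma hv_injective {i : Fin 3} : Function.Injective (fun v : D.HVert i => D.hv v) := by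
  intro v w h
  have h' : (Sum.inl ⟨i, v⟩ : (Σ j : Fin 3, D.HVert j) ⊕ ((Fin 3 × Fin 3) ⊕ Unit))
      = Sum.inl ⟨i, w⟩ := h
  simpa using h'

lemma hv_mem_Hset {i : Fin 3} (v : D.HVert i) : D.hv v ∈ D.Hset i := ⟨v, rfl⟩

lemma x0v_mem_Hset (i : Fin 3) : D.x0v i ∈ D.Hset i := ⟨_, rfl⟩
lemma y0v_mem_Hset (i : Fin 3) : D.y0v i ∈ D.Hset i := ⟨_, rfl⟩
lemma x1v_mem_Hset (i : Fin 3) : D.x1v i ∈ D.Hset i := ⟨_, rfl⟩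
lemma y1v_mem_Hset (i : Fin 3) : D.y1v i ∈ D.Hset i := ⟨_, rfl⟩

lemma av_not_mem_Hset {i j : Fin 3} : D.av j ∉ D.Hset i := by
  rintro ⟨v, h⟩; exact hv_ne_av v h.symm
lemma bv_not_mem_Hset {i j : Fin 3} : D.bv j ∉ D.Hset i := by
  rintro ⟨v, h⟩; exact hv_ne_bv v h.symm
lemma cv_not_mem_Hset {i j : Fin 3} : D.cv j ∉ D.Hset i := by
  rintro ⟨v, h⟩; exact hv_ne_cv v h.symm
lemma uv_not_mem_Hset {i : Fin 3} : D.uv ∉ D.Hset i := by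
  rintro ⟨v, h⟩; exact hv_ne_uv v h.symm

lemma mem_Hset_index {i j : Fin 3} {v : D.HVert i} (h : D.hv v ∈ D.Hset j) : i = j := by
  obtain ⟨w, hw⟩ := h; exact hv_eq_index hw

lemma adj_uv_iff {w : D.Vert} : D.graph.Adj D.uv w ↔ ∃ j, w = D.cv j := by
  rw [graph, SimpleGraph.fromRel_adj]
  constructor
  · rintro ⟨hne, h | h⟩ <;>
      rcases h with ⟨i, v, w', hadj, hp, hq⟩ | ⟨i, hp, hq⟩ | ⟨i, hp, hq⟩ | ⟨i, hp, hq⟩ |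
        ⟨i, hp, hq⟩ | ⟨i, hp, hq⟩
    · exact absurd hp.symm (hv_ne_uv v)
    · exact absurd hp.symm av_ne_uv
    · exact absurd hp.symm av_ne_uv
    · exact absurd hp.symm bv_ne_uv
    · exact absurd hp.symm bv_ne_uv
    · exact absurd hp.symm cv_ne_uv
    · exact absurd hq.symm (hv_ne_uv w')
    · exact absurd hq.symm (hv_ne_uv _)
    · exact absurd hq.symm (hv_ne_uv _)
    · exact absurd hq.symm (hv_ne_uv _)
    · exact absurd hq.symm (hv_ne_uv _)
    · exact ⟨i, hp⟩
  · rintro ⟨j, rfl⟩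
    exact ⟨fun h => cv_ne_uv h.symm, Or.inr (Or.inr (Or.inr (Or.inr (Or.inr (Or.inr
      ⟨j, rfl, Or.inr (Or.inr rfl)⟩)))))⟩

lemma adj_cv_iff {j : Fin 3} {w : D.Vert} :
    D.graph.Adj (D.cv j) w ↔ w = D.av j ∨ w = D.bv j ∨ w = D.uv := by
  rw [graph, SimpleGraph.fromRel_adj]
  constructor
  · rintro ⟨hne, h | h⟩ <;>
      rcases h with ⟨i, v, w', hadj, hp, hq⟩ | ⟨i, hp, hq⟩ | ⟨i, hp, hq⟩ | ⟨i, hp, hq⟩ |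
        ⟨i, hp, hq⟩ | ⟨i, hp, hq⟩
    · exact absurd hp.symm (hv_ne_cv v)
    · exact absurd hp.symm av_ne_cv
    · exact absurd hp.symm av_ne_cv
    · exact absurd hp.symm bv_ne_cv
    · exact absurd hp.symm bv_ne_cv
    · obtain rfl : j = i := cv_inj hp
      exact hq
    · exact absurd hq.symm (hv_ne_cv w')
    · exact absurd hq.symm (hv_ne_cv _)
    · exact absurd hq.symm (hv_ne_cv _)
    · exact absurd hq.symm (hv_ne_cv _)
    · exact absurd hq.symm (hv_ne_cv _)
    · rcases hq with hq | hq | hq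
      · exact absurd hq.symm av_ne_cv
      · exact absurd hq.symm bv_ne_cv
      · exact absurd hq cv_ne_uv
  · rintro (rfl | rfl | rfl)
    · exact ⟨fun h => av_ne_cv h.symm, Or.inl (Or.inr (Or.inr (Or.inr (Or.inr (Or.inr
        ⟨j, rfl, Or.inl rfl⟩)))))⟩
    · exact ⟨fun h => bv_ne_cv h.symm, Or.inl (Or.inr (Or.inr (Or.inr (Or.inr (Or.inr
        ⟨j, rfl, Or.inr (Or.inl rfl)⟩)))))⟩
    · exact ⟨cv_ne_uv, Or.inl (Or.inr (Or.inr (Or.inr (Or.inr (Or.inr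
        ⟨j, rfl, Or.inr (Or.inr rfl)⟩)))))⟩

lemma adj_av_iff {j : Fin 3} {w : D.Vert} :
    D.graph.Adj (D.av j) w ↔ w = D.cv j ∨ w = D.x0v (j+1) ∨ w = D.y0v (j-1) := by
  rw [graph, SimpleGraph.fromRel_adj]
  constructor
  · rintro ⟨hne, h | h⟩ <;>
      rcases h with ⟨i, v, w', hadj, hp, hq⟩ | ⟨i, hp, hq⟩ | ⟨i, hp, hq⟩ | ⟨i, hp, hq⟩ |
        ⟨i, hp, hq⟩ | ⟨i, hp, hq⟩
    · exact absurd hp.symm (hv_ne_av v)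
    · obtain rfl : j = i := av_inj hp
      exact Or.inr (Or.inl hq)
    · obtain rfl : j = i := av_inj hp
      exact Or.inr (Or.inr hq)
    · exact absurd hp av_ne_bv
    · exact absurd hp av_ne_bv
    · exact absurd hp av_ne_cv
    · exact absurd hq.symm (hv_ne_av w')
    · exact absurd hq.symm (hv_ne_av _)
    · exact absurd hq.symm (hv_ne_av _)
    · exact absurd hq.symm (hv_ne_av _)
    · exact absurd hq.symm (hv_ne_av _)
    · rcases hq with hq | hq | hq
      · obtain rfl : j = i := av_inj hq
        exact Or.inl hp
      · exact absurd hq av_ne_bv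
      · exact absurd hq av_ne_uv
  · rintro (rfl | rfl | rfl)
    · exact ⟨av_ne_cv, Or.inr (Or.inr (Or.inr (Or.inr (Or.inr (Or.inr
        ⟨j, rfl, Or.inl rfl⟩)))))⟩
    · exact ⟨fun h => hv_ne_av _ h.symm, Or.inl (Or.inr (Or.inl ⟨j, rfl, rfl⟩))⟩
    · exact ⟨fun h => hv_ne_av _ h.symm, Or.inl (Or.inr (Or.inr (Or.inl ⟨j, rfl, rfl⟩)))⟩

lemma adj_bv_iff {j : Fin 3} {w : D.Vert} :
    D.graph.Adj (D.bv j) w ↔ w = D.cv j ∨ w = D.x1v (j+1) ∨ w = D.y1v (j-1) := by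
  rw [graph, SimpleGraph.fromRel_adj]
  constructor
  · rintro ⟨hne, h | h⟩ <;>
      rcases h with ⟨i, v, w', hadj, hp, hq⟩ | ⟨i, hp, hq⟩ | ⟨i, hp, hq⟩ | ⟨i, hp, hq⟩ |
        ⟨i, hp, hq⟩ | ⟨i, hp, hq⟩
    · exact absurd hp.symm (hv_ne_bv v)
    · exact absurd hp.symm av_ne_bv
    · exact absurd hp.symm av_ne_bv
    · obtain rfl : j = i := bv_inj hp
      exact Or.inr (Or.inl hq)
    · obtain rfl : j = i := bv_inj hp
      exact Or.inr (Or.inr hq)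
    · exact absurd hp bv_ne_cv
    · exact absurd hq.symm (hv_ne_bv w')
    · exact absurd hq.symm (hv_ne_bv _)
    · exact absurd hq.symm (hv_ne_bv _)
    · exact absurd hq.symm (hv_ne_bv _)
    · exact absurd hq.symm (hv_ne_bv _)
    · rcases hq with hq | hq | hq
      · exact absurd hq.symm av_ne_bv
      · obtain rfl : j = i := bv_inj hq
        exact Or.inl hp
      · exact absurd hq bv_ne_uv
  · rintro (rfl | rfl | rfl)
    · exact ⟨bv_ne_cv, Or.inr (Or.inr (Or.inr (Or.inr (Or.inr (Or.inr
        ⟨j, rfl, Or.inr (Or.inl rfl)⟩)))))⟩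
    · exact ⟨fun h => hv_ne_bv _ h.symm, Or.inl (Or.inr (Or.inr (Or.inr (Or.inl ⟨j, rfl, rfl⟩))))⟩
    · exact ⟨fun h => hv_ne_bv _ h.symm, Or.inl (Or.inr (Or.inr (Or.inr (Or.inr (Or.inl
        ⟨j, rfl, rfl⟩)))))⟩

lemma adj_boundary {i : Fin 3} {p q : D.Vert} (hp : p ∈ D.Hset i) (hq : q ∉ D.Hset i)
    (h : D.graph.Adj p q) :
    (q = D.av (i-1) ∧ p = D.x0v i) ∨ (q = D.av (i+1) ∧ p = D.y0v i) ∨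
    (q = D.bv (i-1) ∧ p = D.x1v i) ∨ (q = D.bv (i+1) ∧ p = D.y1v i) := by
  obtain ⟨v, rfl⟩ := hp
  rw [graph, SimpleGraph.fromRel_adj] at h
  obtain ⟨hne, h | h⟩ := h <;>
    rcases h with ⟨l, v', w', hadj, hp', hq'⟩ | ⟨l, hp', hq'⟩ | ⟨l, hp', hq'⟩ | ⟨l, hp', hq'⟩ |
      ⟨l, hp', hq'⟩ | ⟨l, hp', hq'⟩
  · obtain rfl : i = l := hv_eq_index hp'
    exact absurd (hq' ▸ hv_mem_Hset w') hq
  · exact absurd hp' (hv_ne_av v)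
  · exact absurd hp' (hv_ne_av v)
  · exact absurd hp' (hv_ne_bv v)
  · exact absurd hp' (hv_ne_bv v)
  · exact absurd hp' (hv_ne_cv v)
  · obtain rfl : i = l := hv_eq_index hq'
    exact absurd (hp' ▸ hv_mem_Hset v') hq
  · have hil : i = l + 1 := hv_eq_index hq'
    have hl : l = i - 1 := by rw [hil]; simp
    exact Or.inl ⟨hl ▸ hp', by rw [hq', ← hil]⟩
  · have hil : i = l - 1 := hv_eq_index hq'
    have hl : l = i + 1 := by rw [hil]; simp
    exact Or.inr (Or.inl ⟨hl ▸ hp', by rw [hq', ← hil]⟩)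
  · have hil : i = l + 1 := hv_eq_index hq'
    have hl : l = i - 1 := by rw [hil]; simp
    exact Or.inr (Or.inr (Or.inl ⟨hl ▸ hp', by rw [hq', ← hil]⟩))
  · have hil : i = l - 1 := hv_eq_index hq'
    have hl : l = i + 1 := by rw [hil]; simp
    exact Or.inr (Or.inr (Or.inr ⟨hl ▸ hp', by rw [hq', ← hil]⟩))
  · rcases hq' with hq' | hq' | hq'
    · exact absurd hq' (hv_ne_av v)
    · exact absurd hq' (hv_ne_bv v)
    · exact absurd hq' (hv_ne_uv v)

end WindmillData

open WindmillData in
/-- Every perfect matching `M` of a windmill graph of three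
snarks satisfies `|M ∩ ∂H i| ∈ {0, 2}` for each `i`; moreover `M` is of type 2
on at most one `H i`, of type 0 on exactly one `H i`, and of type 1 on at least
one `H i`. -/
theorem windmill_matching_types (D : WindmillData) (hfin : ∀ i, Finite (D.V i))
    (hsn : ∀ i, IsSnark (D.G i))
    (M : D.graph.Subgraph) (hM : M.IsPerfectMatching) :
    (∀ i : Fin 3, (M.edgeSet ∩ edgeBoundary D.graph (D.Hset i)).ncard = 0 ∨
       (M.edgeSet ∩ edgeBoundary D.graph (D.Hset i)).ncard = 2) ∧
    {i : Fin 3 | D.Type2On M.edgeSet i}.ncard ≤ 1 ∧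
    {i : Fin 3 | D.Type0On M.edgeSet i}.ncard = 1 ∧
    1 ≤ {i : Fin 3 | D.Type1On M.edgeSet i}.ncard := by
  classical
  have hfinH : ∀ i, Finite (D.HVert i) := fun i => by
    haveI := hfin i
    exact Subtype.finite
  haveI hfinV : Finite D.Vert := by
    haveI := hfinH
    show Finite ((Σ i : Fin 3, D.HVert i) ⊕ ((Fin 3 × Fin 3) ⊕ Unit))
    infer_instance
  -- the matching partner function
  choose f hf hfu using fun v => hM.1 (hM.2 v)
  have hinv : ∀ v, f (f v) = v := fun v => (hfu (f v) v (hf v).symm).symm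
  have hfne : ∀ v, f v ≠ v := fun v => ((hf v).ne).symm
  have hG : ∀ v, D.graph.Adj v (f v) := fun v => M.adj_sub (hf v)
  -- the partner of u
  obtain ⟨i0, hu⟩ : ∃ j, f D.uv = D.cv j := adj_uv_iff.mp (hG D.uv)
  have hcu : f (D.cv i0) = D.uv := by rw [← hu, hinv]
  -- index arithmetic
  have hne13 : ∀ j : Fin 3, j + 1 ≠ j - 1 := by decide
  have hxy0 : ∀ j : Fin 3, D.x0v (j+1) ≠ D.y0v (j-1) := fun j h => hne13 j (hv_eq_index h)
  have hxy1 : ∀ j : Fin 3, D.x1v (j+1) ≠ D.y1v (j-1) := fun j h => hne13 j (hv_eq_index h)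
  -- the combinatorial data
  obtain ⟨Av, hA⟩ : ∃ Av : Fin 3 → Fin 3, ∀ j,
      (f (D.av j) = D.cv j ∧ Av j = 0) ∨ (f (D.av j) = D.x0v (j+1) ∧ Av j = 1) ∨
      (f (D.av j) = D.y0v (j-1) ∧ Av j = 2) := by
    refine ⟨fun j => if f (D.av j) = D.cv j then 0 else
      if f (D.av j) = D.x0v (j+1) then 1 else 2, fun j => ?_⟩
    rcases adj_av_iff.mp (hG (D.av j)) with h | h | h
    · exact Or.inl ⟨h, if_pos h⟩
    · have hn1 : ¬ f (D.av j) = D.cv j := by rw [h]; exact fun hc => hv_ne_cv _ hc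
      exact Or.inr (Or.inl ⟨h, by simp only [if_neg hn1, if_pos h]⟩)
    · have hn1 : ¬ f (D.av j) = D.cv j := by rw [h]; exact fun hc => hv_ne_cv _ hc
      have hn2 : ¬ f (D.av j) = D.x0v (j+1) := by rw [h]; exact fun hc => hxy0 j hc.symm
      exact Or.inr (Or.inr ⟨h, by simp only [if_neg hn1, if_neg hn2]⟩)
  obtain ⟨Bv, hB⟩ : ∃ Bv : Fin 3 → Fin 3, ∀ j,
      (f (D.bv j) = D.cv j ∧ Bv j = 0) ∨ (f (D.bv j) = D.x1v (j+1) ∧ Bv j = 1) ∨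
      (f (D.bv j) = D.y1v (j-1) ∧ Bv j = 2) := by
    refine ⟨fun j => if f (D.bv j) = D.cv j then 0 else
      if f (D.bv j) = D.x1v (j+1) then 1 else 2, fun j => ?_⟩
    rcases adj_bv_iff.mp (hG (D.bv j)) with h | h | h
    · exact Or.inl ⟨h, if_pos h⟩
    · have hn1 : ¬ f (D.bv j) = D.cv j := by rw [h]; exact fun hc => hv_ne_cv _ hc
      exact Or.inr (Or.inl ⟨h, by simp only [if_neg hn1, if_pos h]⟩)
    · have hn1 : ¬ f (D.bv j) = D.cv j := by rw [h]; exact fun hc => hv_ne_cv _ hc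
      have hn2 : ¬ f (D.bv j) = D.x1v (j+1) := by rw [h]; exact fun hc => hxy1 j hc.symm
      exact Or.inr (Or.inr ⟨h, by simp only [if_neg hn1, if_neg hn2]⟩)
  have hC : ∀ j, f (D.cv j) = D.av j ∨ f (D.cv j) = D.bv j ∨ f (D.cv j) = D.uv :=
    fun j => adj_cv_iff.mp (hG (D.cv j))
  -- iff characterisations of the values
  have hAiff : ∀ j, (Av j = 0 ↔ f (D.av j) = D.cv j) := by
    intro j
    constructor
    · intro h0
      rcases hA j with ⟨hx, -⟩ | ⟨-, h1⟩ | ⟨-, h1⟩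
      · exact hx
      · rw [h0] at h1; exact absurd h1 (by decide)
      · rw [h0] at h1; exact absurd h1 (by decide)
    · intro hx
      rcases hA j with ⟨-, h0⟩ | ⟨hy, -⟩ | ⟨hy, -⟩
      · exact h0
      · rw [hx] at hy; exact absurd hy (fun hc => hv_ne_cv _ hc.symm)
      · rw [hx] at hy; exact absurd hy (fun hc => hv_ne_cv _ hc.symm)
  have hBiff : ∀ j, (Bv j = 0 ↔ f (D.bv j) = D.cv j) := by
    intro j
    constructor
    · intro h0
      rcases hB j with ⟨hx, -⟩ | ⟨-, h1⟩ | ⟨-, h1⟩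
      · exact hx
      · rw [h0] at h1; exact absurd h1 (by decide)
      · rw [h0] at h1; exact absurd h1 (by decide)
    · intro hx
      rcases hB j with ⟨-, h0⟩ | ⟨hy, -⟩ | ⟨hy, -⟩
      · exact h0
      · rw [hx] at hy; exact absurd hy (fun hc => hv_ne_cv _ hc.symm)
      · rw [hx] at hy; exact absurd hy (fun hc => hv_ne_cv _ hc.symm)
  have hAc : ∀ j, (f (D.av j) = D.cv j ↔ f (D.cv j) = D.av j) :=
    fun j => ⟨fun h => by rw [← h, hinv], fun h => by rw [← h, hinv]⟩
  have hBc : ∀ j, (f (D.bv j) = D.cv j ↔ f (D.cv j) = D.bv j) :=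
    fun j => ⟨fun h => by rw [← h, hinv], fun h => by rw [← h, hinv]⟩
  -- hypotheses of the key lemma
  have h1con : ∀ j, j ≠ i0 → (Av j = 0 ↔ ¬ Bv j = 0) := by
    intro j hj
    have hCuv : f (D.cv j) ≠ D.uv := by
      intro h
      exact hj (cv_inj (show D.cv j = D.cv i0 by rw [← hu, ← h, hinv]))
    rw [hAiff j, hBiff j, hAc j, hBc j]
    rcases hC j with h | h | h
    · rw [h]
      exact ⟨fun _ hc => av_ne_bv hc, fun _ => rfl⟩
    · rw [h]
      exact ⟨fun hc => absurd hc (fun hc' => av_ne_bv hc'.symm), fun hnc => absurd rfl hnc⟩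
    · exact absurd h hCuv
  have h2 : Av i0 ≠ 0 := by
    intro h0
    have hx : f (D.av i0) = D.cv i0 := (hAiff i0).mp h0
    have : f (D.cv i0) = D.av i0 := (hAc i0).mp hx
    rw [hcu] at this
    exact av_ne_uv this.symm
  have h3 : Bv i0 ≠ 0 := by
    intro h0
    have hx : f (D.bv i0) = D.cv i0 := (hBiff i0).mp h0
    have : f (D.cv i0) = D.bv i0 := (hBc i0).mp hx
    rw [hcu] at this
    exact bv_ne_uv this.symm
  -- membership iffs for boundary counting
  have hiffa1 : ∀ i : Fin 3, (f (D.av (i-1)) ∈ D.Hset i ↔ Av (i-1) = 1) := by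
    intro i
    have e1 : (i - 1) + 1 = i := by simp
    rcases hA (i-1) with ⟨hx, hv0⟩ | ⟨hx, hv1⟩ | ⟨hx, hv2⟩
    · rw [hx, hv0]
      exact ⟨fun h => absurd h cv_not_mem_Hset, fun h => absurd h (by decide)⟩
    · rw [hx, hv1, e1]
      exact ⟨fun _ => rfl, fun _ => x0v_mem_Hset i⟩
    · rw [hx, hv2]
      exact ⟨fun h => absurd (mem_Hset_index h) ((by decide : ∀ k : Fin 3, k-1-1 ≠ k) i),
        fun h => absurd h (by decide)⟩
  have hiffa2 : ∀ i : Fin 3, (f (D.av (i+1)) ∈ D.Hset i ↔ Av (i+1) = 2) := by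
    intro i
    have e1 : (i + 1) - 1 = i := by simp
    rcases hA (i+1) with ⟨hx, hv0⟩ | ⟨hx, hv1⟩ | ⟨hx, hv2⟩
    · rw [hx, hv0]
      exact ⟨fun h => absurd h cv_not_mem_Hset, fun h => absurd h (by decide)⟩
    · rw [hx, hv1]
      exact ⟨fun h => absurd (mem_Hset_index h) ((by decide : ∀ k : Fin 3, k+1+1 ≠ k) i),
        fun h => absurd h (by decide)⟩
    · rw [hx, hv2, e1]
      exact ⟨fun _ => rfl, fun _ => y0v_mem_Hset i⟩
  have hiffb1 : ∀ i : Fin 3, (f (D.bv (i-1)) ∈ D.Hset i ↔ Bv (i-1) = 1) := by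
    intro i
    have e1 : (i - 1) + 1 = i := by simp
    rcases hB (i-1) with ⟨hx, hv0⟩ | ⟨hx, hv1⟩ | ⟨hx, hv2⟩
    · rw [hx, hv0]
      exact ⟨fun h => absurd h cv_not_mem_Hset, fun h => absurd h (by decide)⟩
    · rw [hx, hv1, e1]
      exact ⟨fun _ => rfl, fun _ => x1v_mem_Hset i⟩
    · rw [hx, hv2]
      exact ⟨fun h => absurd (mem_Hset_index h) ((by decide : ∀ k : Fin 3, k-1-1 ≠ k) i),
        fun h => absurd h (by decide)⟩
  have hiffb2 : ∀ i : Fin 3, (f (D.bv (i+1)) ∈ D.Hset i ↔ Bv (i+1) = 2) := by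
    intro i
    have e1 : (i + 1) - 1 = i := by simp
    rcases hB (i+1) with ⟨hx, hv0⟩ | ⟨hx, hv1⟩ | ⟨hx, hv2⟩
    · rw [hx, hv0]
      exact ⟨fun h => absurd h cv_not_mem_Hset, fun h => absurd h (by decide)⟩
    · rw [hx, hv1]
      exact ⟨fun h => absurd (mem_Hset_index h) ((by decide : ∀ k : Fin 3, k+1+1 ≠ k) i),
        fun h => absurd h (by decide)⟩
    · rw [hx, hv2, e1]
      exact ⟨fun _ => rfl, fun _ => y1v_mem_Hset i⟩
  -- boundary edge count via vertices
  have hbdW : ∀ i, (M.edgeSet ∩ edgeBoundary D.graph (D.Hset i)).ncard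
      = {w | w ∈ (D.Hset i)ᶜ ∧ f w ∈ D.Hset i}.ncard :=
    fun i => pm_ncard_between hf hfu (D.Hset i) (D.Hset i)ᶜ (fun x hx hxc => hxc hx)
  have hbd : ∀ i, (M.edgeSet ∩ edgeBoundary D.graph (D.Hset i)).ncard
      = (mcount Av Bv i).1 + (mcount Av Bv i).2 := by
    intro i
    rw [hbdW i]
    have h2' : {w | w ∈ (D.Hset i)ᶜ ∧ f w ∈ D.Hset i}
        = ↑(({D.av (i-1), D.av (i+1), D.bv (i-1), D.bv (i+1)} : Finset D.Vert).filter
            (fun w => f w ∈ D.Hset i)) := by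
      ext w
      simp only [Set.mem_setOf_eq, Finset.coe_filter, Finset.mem_insert, Finset.mem_singleton,
        Set.mem_compl_iff]
      constructor
      · rintro ⟨hw, hfw⟩
        refine ⟨?_, hfw⟩
        rcases adj_boundary hfw hw (M.adj_sub (hf w).symm) with ⟨h,-⟩|⟨h,-⟩|⟨h,-⟩|⟨h,-⟩ <;> tauto
      · rintro ⟨hw, hfw⟩
        refine ⟨?_, hfw⟩
        rcases hw with rfl|rfl|rfl|rfl
        exacts [av_not_mem_Hset, av_not_mem_Hset, bv_not_mem_Hset, bv_not_mem_Hset]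
    rw [h2', Set.ncard_coe_finset, Finset.card_filter]
    have d1 : D.av (i-1) ∉ ({D.av (i+1), D.bv (i-1), D.bv (i+1)} : Finset D.Vert) := by
      simp only [Finset.mem_insert, Finset.mem_singleton]
      push_neg
      exact ⟨fun h => (by decide : ∀ k : Fin 3, k - 1 ≠ k + 1) i (av_inj h),
        av_ne_bv, av_ne_bv⟩
    have d2 : D.av (i+1) ∉ ({D.bv (i-1), D.bv (i+1)} : Finset D.Vert) := by
      simp only [Finset.mem_insert, Finset.mem_singleton]
      push_neg
      exact ⟨av_ne_bv, av_ne_bv⟩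
    have d3 : D.bv (i-1) ∉ ({D.bv (i+1)} : Finset D.Vert) := by
      simp only [Finset.mem_singleton]
      exact fun h => (by decide : ∀ k : Fin 3, k - 1 ≠ k + 1) i (bv_inj h)
    rw [Finset.sum_insert d1, Finset.sum_insert d2, Finset.sum_insert d3, Finset.sum_singleton]
    simp only [hiffa1 i, hiffa2 i, hiffb1 i, hiffb2 i, mcount]
    omega
  -- counts towards the A-sets
  have hdisj1 : ∀ (i j : Fin 3) (x : D.Vert), x ∈ D.Hset i → x ∉ D.Aset j := by
    intro i j x hx hax
    simp only [WindmillData.Aset, Set.mem_insert_iff, Set.mem_singleton_iff] at hax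
    rcases hax with rfl | rfl | rfl
    exacts [av_not_mem_Hset hx, bv_not_mem_Hset hx, cv_not_mem_Hset hx]
  have hcvH : ∀ (j i : Fin 3), ¬ (f (D.cv j) ∈ D.Hset i) := by
    intro j i h
    rcases hC j with hc | hc | hc <;> rw [hc] at h
    exacts [av_not_mem_Hset h, bv_not_mem_Hset h, uv_not_mem_Hset h]
  have hAsetF : ∀ (i j : Fin 3), {w | w ∈ D.Aset j ∧ f w ∈ D.Hset i}
      = ↑(({D.av j, D.bv j, D.cv j} : Finset D.Vert).filter (fun w => f w ∈ D.Hset i)) := by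
    intro i j
    ext w
    simp only [Set.mem_setOf_eq, Finset.coe_filter, Finset.mem_insert, Finset.mem_singleton,
      WindmillData.Aset, Set.mem_insert_iff, Set.mem_singleton_iff]
  have dab : ∀ j : Fin 3, D.av j ∉ ({D.bv j, D.cv j} : Finset D.Vert) := by
    intro j
    simp only [Finset.mem_insert, Finset.mem_singleton]
    push_neg
    exact ⟨av_ne_bv, av_ne_cv⟩
  have dbc : ∀ j : Fin 3, D.bv j ∉ ({D.cv j} : Finset D.Vert) := by
    intro j
    simp only [Finset.mem_singleton]
    exact bv_ne_cv
  have hbet1 : ∀ i, (M.edgeSet ∩ edgesBetween D.graph (D.Hset i) (D.Aset (i-1))).ncard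
      = (mcount Av Bv i).1 := by
    intro i
    rw [pm_ncard_between hf hfu (D.Hset i) (D.Aset (i-1)) (hdisj1 i (i-1)), hAsetF i (i-1),
      Set.ncard_coe_finset, Finset.card_filter, Finset.sum_insert (dab (i-1)),
      Finset.sum_insert (dbc (i-1)), Finset.sum_singleton]
    simp only [hiffa1 i, hiffb1 i, if_neg (hcvH (i-1) i), mcount]
    omega
  have hbet2 : ∀ i, (M.edgeSet ∩ edgesBetween D.graph (D.Hset i) (D.Aset (i+1))).ncard
      = (mcount Av Bv i).2 := by
    intro i
    rw [pm_ncard_between hf hfu (D.Hset i) (D.Aset (i+1)) (hdisj1 i (i+1)), hAsetF i (i+1),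
      Set.ncard_coe_finset, Finset.card_filter, Finset.sum_insert (dab (i+1)),
      Finset.sum_insert (dbc (i+1)), Finset.sum_singleton]
    simp only [hiffa2 i, hiffb2 i, if_neg (hcvH (i+1) i), mcount]
    omega
  -- evenness of |Hset i|
  have hHeven : ∀ i, Even ((D.Hset i).ncard) := by
    intro i
    have hr : D.Hset i = Set.range (fun v : D.HVert i => D.hv v) := by
      ext w
      exact ⟨fun ⟨v, h⟩ => ⟨v, h.symm⟩, fun ⟨v, h⟩ => ⟨v, h.symm⟩⟩
    rw [hr, ← Nat.card_coe_set_eq, Nat.card_range_of_injective hv_injective]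
    -- Even (Nat.card (D.HVert i))
    haveI := hfin i
    letI : Fintype (D.V i) := Fintype.ofFinite _
    have hxy : D.x i ≠ D.y i := (D.adj_xy i).ne
    have hVeven : Even (Fintype.card (D.V i)) := by
      letI : DecidableRel (D.G i).Adj := Classical.decRel _
      have hdeg : ∀ v, (D.G i).degree v = 3 := by
        intro v
        have h3 := (hsn i).1 v
        rw [← Nat.card_coe_set_eq, Nat.card_eq_fintype_card] at h3
        rw [← SimpleGraph.card_neighborSet_eq_degree]
        exact h3
      have hsum := SimpleGraph.sum_degrees_eq_twice_card_edges (D.G i)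
      rw [Finset.sum_congr rfl (fun v _ => hdeg v), Finset.sum_const, Finset.card_univ,
        smul_eq_mul] at hsum
      have heven : Even (Fintype.card (D.V i) * 3) := by
        rw [hsum]; exact ⟨_, two_mul _⟩
      rcases Nat.even_mul.mp heven with h | h
      · exact h
      · exact absurd h (by decide)
    have hVge : 2 ≤ Fintype.card (D.V i) :=
      Fintype.one_lt_card_iff_nontrivial.mpr ⟨⟨_, _, hxy⟩⟩
    have hcard : Nat.card (D.HVert i) = Fintype.card (D.V i) - 2 := by
      show Nat.card {v : D.V i // v ≠ D.x i ∧ v ≠ D.y i} = _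
      rw [Nat.card_eq_fintype_card, Fintype.card_subtype]
      have hfilter : (Finset.univ.filter fun v => v ≠ D.x i ∧ v ≠ D.y i)
          = Finset.univ \ {D.x i, D.y i} := by
        ext v
        simp [not_or]
      rw [hfilter, Finset.card_sdiff_of_subset (Finset.subset_univ _),
        Finset.card_insert_of_notMem (by simpa using hxy), Finset.card_singleton,
        Finset.card_univ]
    rw [hcard, Nat.even_sub hVge]
    exact iff_of_true hVeven (by decide)
  -- parity of the boundary counts
  have hpar : ∀ i, ((mcount Av Bv i).1 + (mcount Av Bv i).2) % 2 = 0 := by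
    intro i
    rw [← hbd i, hbdW i, ← Nat.even_iff]
    have hWS : {w | w ∈ (D.Hset i)ᶜ ∧ f w ∈ D.Hset i}
        = f '' {v | v ∈ D.Hset i ∧ f v ∉ D.Hset i} := by
      ext w
      constructor
      · rintro ⟨hw, hfw⟩
        exact ⟨f w, ⟨hfw, by rw [hinv]; exact hw⟩, hinv w⟩
      · rintro ⟨v, ⟨hv, hfv⟩, rfl⟩
        exact ⟨hfv, by rw [hinv]; exact hv⟩
    rw [hWS, Set.ncard_image_of_injOn (fun a _ b _ h => by rw [← hinv a, h, hinv])]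
    have hunion : {v | v ∈ D.Hset i ∧ f v ∈ D.Hset i} ∪ {v | v ∈ D.Hset i ∧ f v ∉ D.Hset i}
        = D.Hset i := by
      ext v
      constructor
      · rintro (⟨h, -⟩ | ⟨h, -⟩) <;> exact h
      · intro h
        by_cases hc : f v ∈ D.Hset i
        · exact Or.inl ⟨h, hc⟩
        · exact Or.inr ⟨h, hc⟩
    have hdisj : Disjoint {v | v ∈ D.Hset i ∧ f v ∈ D.Hset i}
        {v | v ∈ D.Hset i ∧ f v ∉ D.Hset i} :=
      Set.disjoint_left.mpr (fun v hv hv' => hv'.2 hv.2)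
    have hTS : {v | v ∈ D.Hset i ∧ f v ∈ D.Hset i}.ncard
        + {v | v ∈ D.Hset i ∧ f v ∉ D.Hset i}.ncard = (D.Hset i).ncard := by
      rw [← Set.ncard_union_eq hdisj (Set.toFinite _) (Set.toFinite _), hunion]
    have hTeven : Even ({v | v ∈ D.Hset i ∧ f v ∈ D.Hset i}.ncard) := by
      letI := Fintype.ofFinite D.Vert
      rw [Set.ncard_eq_toFinset_card']
      apply even_card_of_involution' _ f
      · intro x hx
        rw [Set.mem_toFinset] at hx ⊢
        exact ⟨hx.2, by rw [hinv]; exact hx.1⟩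
      · intro x _
        exact hinv x
      · intro x _
        exact hfne x
    have := hHeven i
    rw [← hTS] at this
    exact (Nat.even_add.mp this).mp hTeven
  -- apply the key lemma
  obtain ⟨K1, K2, K3, K4⟩ := key_lemma Av Bv i0 h1con h2 h3 hpar
  refine ⟨fun i => by rw [hbd i]; exact K1 i, ?_, ?_, ?_⟩
  · have hT2 : {i : Fin 3 | D.Type2On M.edgeSet i}
        = ↑(Finset.univ.filter fun i => (mcount Av Bv i).1 + (mcount Av Bv i).2 = 2 ∧
            ¬((mcount Av Bv i).1 = 1 ∧ (mcount Av Bv i).2 = 1)) := by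
      ext i
      simp only [Set.mem_setOf_eq, Finset.mem_coe, Finset.mem_filter, Finset.mem_univ, true_and]
      unfold WindmillData.Type2On WindmillData.Type1On
      rw [hbd i, hbet1 i, hbet2 i]
    rw [hT2, Set.ncard_coe_finset]
    exact K2
  · have hT0 : {i : Fin 3 | D.Type0On M.edgeSet i}
        = ↑(Finset.univ.filter fun i => (mcount Av Bv i).1 + (mcount Av Bv i).2 = 0) := by
      ext i
      simp only [Set.mem_setOf_eq, Finset.mem_coe, Finset.mem_filter, Finset.mem_univ, true_and]
      unfold WindmillData.Type0On
      rw [hbd i]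
    rw [hT0, Set.ncard_coe_finset]
    exact K3
  · have hT1 : {i : Fin 3 | D.Type1On M.edgeSet i}
        = ↑(Finset.univ.filter fun i => (mcount Av Bv i).1 = 1 ∧ (mcount Av Bv i).2 = 1) := by
      ext i
      simp only [Set.mem_setOf_eq, Finset.mem_coe, Finset.mem_filter, Finset.mem_univ, true_and]
      unfold WindmillData.Type1On
      rw [hbet1 i, hbet2 i]
    rw [hT1, Set.ncard_coe_finset]
    exact K4
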